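/- For real y > 0 and real x, the Voigt function K(x,y) = (y/π)·∫_{-∞}^{∞} exp(-t²)/(y² + (x-t)²) dt and the function L(x,y) = (1/π)·∫_{-∞}^{∞} exp(-t²)(x-t)/(y² + (x-t)²) dt satisfy w(x + iy) = K(x,y) + i·L(x,y). -/

import Mathlib

open MeasureTheory

/-- Straight-path integral of exp(t²) from 0 to z. -/
noncomputable def lineInt (z : ℂ) : ℂ := ∫ t in (0:ℝ)..1, z * Complex.exp ((t * z)^2)

/-- The complex error (Faddeeva) function. -/
noncomputable def w (z : ℂ) : ℂ :=
  Complex.exp (-z^2) * (1 + (2 * Complex.I / (Real.sqrt Real.pi : ℂ)) * lineInt z)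
/-- The Voigt function. -/
noncomputable def K (x y : ℝ) : ℝ :=
  (y / Real.pi) * ∫ t : ℝ, Real.exp (-t^2) / (y^2 + (x - t)^2)

/-- The L-function. -/
noncomputable def L (x y : ℝ) : ℝ :=
  (1 / Real.pi) * ∫ t : ℝ, Real.exp (-t^2) * (x - t) / (y^2 + (x - t)^2)

open Real Set Filter Topology Complex

lemma integrable_gauss_shift (c : ℂ) :
    Integrable fun u : ℝ => Complex.exp (-((u:ℂ) - c)^2) := by
  have h := integrable_cexp_quadratic' (b := -1) (by norm_num) (2*c) (-c^2)
  convert h using 2 with u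
  ring_nf

lemma norm_cexp (w : ℂ) : ‖Complex.exp w‖ = Real.exp w.re := Complex.norm_exp w

lemma re_sq_sub (u : ℝ) (c : ℂ) : ((-((u:ℂ) - c)^2)).re = -((u - c.re)^2 - c.im^2) := by
  simp only [Complex.neg_re, sq, Complex.mul_re, Complex.sub_re, Complex.ofReal_re, Complex.sub_im, Complex.ofReal_im]
  ring

-- tendsto atTop to 0

lemma tendsto_gauss_shift (c : ℂ) :
    Tendsto (fun u : ℝ => Complex.exp (-((u:ℂ) - c)^2)) atTop (𝓝 0) := by
  rw [tendsto_zero_iff_norm_tendsto_zero]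
  simp only [norm_cexp, re_sq_sub]
  have : Tendsto (fun u : ℝ => -((u - c.re)^2 - c.im^2)) atTop atBot := by
    apply tendsto_neg_atBot_iff.mpr
    apply tendsto_atTop_add_const_right
    exact (tendsto_pow_atTop two_ne_zero).comp (tendsto_atTop_add_const_right _ _ tendsto_id)
  exact Real.tendsto_exp_atBot.comp this

lemma aux_int (a b : ℝ) : Integrable fun u : ℝ => (|u - a| + b) * Real.exp (-(u - a)^2) := by
  have h0 : Integrable fun x : ℝ => (|x| + b) * Real.exp (-x^2) := by
    have h1 : Integrable fun x : ℝ => x * Real.exp (-x^2) := by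
      simpa using integrable_mul_exp_neg_mul_sq (b := 1) one_pos
    have h2 : Integrable fun x : ℝ => Real.exp (-x^2) := by
      simpa using integrable_exp_neg_mul_sq (b := 1) one_pos
    have h1' := h1.abs
    simp only [abs_mul, abs_of_pos (Real.exp_pos _)] at h1'
    have h3 := h1'.add (h2.const_mul b)
    simp only [Pi.add_def] at h3
    simpa [add_mul] using h3
  exact h0.comp_sub_right a

lemma integrable_mul_gauss_shift (c : ℂ) :
    Integrable fun u : ℝ => ((u:ℂ) - c) * Complex.exp (-((u:ℂ) - c)^2) := by
  apply Integrable.mono' (((aux_int c.re |c.im|).mul_const (Real.exp (c.im^2))))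
    (Continuous.aestronglyMeasurable (by continuity))
  filter_upwards with u
  rw [norm_mul, norm_cexp, re_sq_sub]
  have h1 : ‖(u:ℂ) - c‖ ≤ |u - c.re| + |c.im| := by
    simpa [Complex.sub_re, Complex.sub_im] using Complex.norm_le_abs_re_add_abs_im ((u:ℂ) - c)
  have h2 : Real.exp (-((u - c.re)^2 - c.im^2)) = Real.exp (-(u - c.re)^2) * Real.exp (c.im^2) := by
    rw [← Real.exp_add]; ring_nf
  rw [h2]
  calc ‖(u:ℂ) - c‖ * (Real.exp (-(u - c.re)^2) * Real.exp (c.im^2))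
      ≤ (|u - c.re| + |c.im|) * (Real.exp (-(u - c.re)^2) * Real.exp (c.im^2)) := by
        apply mul_le_mul_of_nonneg_right h1 (by positivity)
    _ = (|u - c.re| + |c.im|) * Real.exp (-(u - c.re)^2) * Real.exp (c.im^2) := by ring

lemma halfline_gauss (c : ℂ) :
    ∫ u in Ioi (0:ℝ), ((u:ℂ) - c) * Complex.exp (-((u:ℂ) - c)^2) = (1/2) * Complex.exp (-c^2) := by
  have hd : ∀ u ∈ Ici (0:ℝ), HasDerivAt (fun v : ℝ => (-1/2 : ℂ) * Complex.exp (-((v:ℂ) - c)^2))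
      (((u:ℂ) - c) * Complex.exp (-((u:ℂ) - c)^2)) u := by
    intro u _
    have H : HasDerivAt (fun w : ℂ => (-1/2 : ℂ) * Complex.exp (-(w - c)^2))
        (((u:ℂ) - c) * Complex.exp (-((u:ℂ) - c)^2)) (u:ℂ) := by
      have h1 : HasDerivAt (fun w : ℂ => -(w - c)^2) (-(2*((u:ℂ) - c))) (u:ℂ) := by
        have := (((hasDerivAt_id ((u:ℂ))).sub_const c).pow 2).neg
        simpa [Pi.pow_def, Pi.neg_def] using this
      have := (h1.cexp).const_mul (-1/2 : ℂ)
      convert this using 1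
      rfl
      rfl
      ring
    exact H.comp_ofReal
  have hm : Tendsto (fun u : ℝ => (-1/2 : ℂ) * Complex.exp (-((u:ℂ) - c)^2)) atTop (𝓝 0) := by
    simpa using (tendsto_gauss_shift c).const_mul (-1/2 : ℂ)
  rw [integral_Ioi_of_hasDerivAt_of_tendsto' hd ((integrable_mul_gauss_shift c).integrableOn) hm]
  simp only [Complex.ofReal_zero, zero_sub, neg_sq]
  ring

lemma gauss_Ioi_complex : ∫ u in Ioi (0:ℝ), Complex.exp (-(u:ℂ)^2) = (Real.sqrt Real.pi / 2 : ℝ) := by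
  have h : ∀ u : ℝ, Complex.exp (-(u:ℂ)^2) = ((Real.exp (-u^2) : ℝ) : ℂ) := by
    intro u; rw [Complex.ofReal_exp]; push_cast; ring_nf
  simp_rw [h]
  have := ContinuousLinearMap.integral_comp_comm Complex.ofRealCLM
    (φ := fun u : ℝ => Real.exp (-u^2)) (μ := volume.restrict (Ioi (0:ℝ)))
    (by have h := (integrable_exp_neg_mul_sq (b:=1) one_pos).integrableOn (s := Ioi (0:ℝ)); simp at h; exact h)
  simp only [Complex.ofRealCLM_apply] at this
  rw [this]
  norm_cast
  simpa using integral_gaussian_Ioi 1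

lemma halfplane_int (z : ℂ) (hz : 0 ≤ z.im) :
    ∫ u in Ioi (0:ℝ), Complex.exp (-((u:ℂ) - Complex.I*z)^2)
      = (Real.sqrt Real.pi / 2 : ℝ) + Complex.I * lineInt z := by
  set f : ℝ → ℝ → ℂ := fun u t =>
    2*Complex.I*z*((u:ℂ) - (t:ℂ)*(Complex.I*z)) * Complex.exp (-((u:ℂ) - (t:ℂ)*(Complex.I*z))^2)
    with hf_def
  -- pointwise FTC in t
  have claim1 : ∀ u : ℝ, Complex.exp (-((u:ℂ) - Complex.I*z)^2) - Complex.exp (-(u:ℂ)^2)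
      = ∫ t in (0:ℝ)..1, f u t := by
    intro u
    have hd : ∀ t ∈ uIcc (0:ℝ) 1, HasDerivAt
        (fun t : ℝ => Complex.exp (-((u:ℂ) - (t:ℂ)*(Complex.I*z))^2)) (f u t) t := by
      intro t _
      have H : HasDerivAt (fun w : ℂ => Complex.exp (-((u:ℂ) - w*(Complex.I*z))^2))
          (f u t) (t:ℂ) := by
        have h1 : HasDerivAt (fun w : ℂ => -((u:ℂ) - w*(Complex.I*z))^2)
            (-(2*((u:ℂ) - (t:ℂ)*(Complex.I*z))) * (-(Complex.I*z))) (t:ℂ) := by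
          have hb : HasDerivAt (fun w : ℂ => (u:ℂ) - w*(Complex.I*z)) (-(Complex.I*z)) (t:ℂ) := by
            simpa using ((hasDerivAt_id ((t:ℂ))).mul_const (Complex.I*z)).const_sub (u:ℂ)
          have := (hb.pow 2).neg
          simp only [Pi.pow_def, Pi.neg_def] at this
          convert this using 1
          rfl
          rfl
          ring
        have := h1.cexp
        convert this using 1
        rfl
        rw [hf_def]; ring
      exact H.comp_ofReal
    have hint : IntervalIntegrable (f u) volume 0 1 := by
      rw [hf_def]
      exact (by fun_prop : Continuous fun t : ℝ =>
        2*Complex.I*z*((u:ℂ) - (t:ℂ)*(Complex.I*z)) *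
          Complex.exp (-((u:ℂ) - (t:ℂ)*(Complex.I*z))^2)).intervalIntegrable 0 1
    have := intervalIntegral.integral_eq_sub_of_hasDerivAt hd hint
    rw [this]
    push_cast
    norm_num
  -- integrability facts
  have hint1 : IntegrableOn (fun u : ℝ => Complex.exp (-((u:ℂ) - Complex.I*z)^2)) (Ioi 0) :=
    (integrable_gauss_shift (Complex.I*z)).integrableOn
  have hint2 : IntegrableOn (fun u : ℝ => Complex.exp (-(u:ℂ)^2)) (Ioi 0) := by
    simpa using (integrable_gauss_shift 0).integrableOn
  -- Fubini
  have hprod : Integrable (Function.uncurry f)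
      ((volume.restrict (Ioi 0)).prod (volume.restrict (Ioc 0 1))) := by
    have hφ : Integrable (fun u : ℝ => 2*‖z‖*((|u| + ‖z‖) * Real.exp (-u^2)) * Real.exp (z.re^2))
        (volume.restrict (Ioi 0)) := by
      have := aux_int 0 ‖z‖
      simp only [sub_zero] at this
      exact (((this.const_mul (2*‖z‖)).mul_const (Real.exp (z.re^2)))).integrableOn
    have hone : Integrable (fun _ : ℝ => (1:ℝ)) (volume.restrict (Ioc 0 1)) := by
      refine integrableOn_const ?_
      simp [Real.volume_Ioc]
    apply Integrable.mono' (hφ.mul_prod hone)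
    · rw [hf_def]
      exact (by fun_prop : Continuous fun p : ℝ × ℝ =>
        2*Complex.I*z*((p.1:ℂ) - (p.2:ℂ)*(Complex.I*z)) *
          Complex.exp (-((p.1:ℂ) - (p.2:ℂ)*(Complex.I*z))^2)).aestronglyMeasurable
    · rw [Measure.prod_restrict]
      filter_upwards [ae_restrict_mem (measurableSet_Ioi.prod measurableSet_Ioc)] with p hp
      obtain ⟨hu, ht⟩ := hp
      obtain ⟨u, t⟩ := p
      simp only [mem_Ioi] at hu
      simp only [mem_Ioc] at ht
      have hu0 : (0:ℝ) ≤ u := le_of_lt hu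
      have ht0 : 0 ≤ t := le_of_lt ht.1
      have ht1 : t ≤ 1 := ht.2
      show ‖f u t‖ ≤ _
      simp only [hf_def, norm_mul, norm_cexp, mul_one]
      have hb1 : ‖(u:ℂ) - (t:ℂ)*(Complex.I*z)‖ ≤ |u| + ‖z‖ := by
        refine (norm_sub_le _ _).trans ?_
        have e1 : ‖(u:ℂ)‖ = |u| := by simp
        have e2 : ‖(t:ℂ)*(Complex.I*z)‖ = |t| * ‖z‖ := by simp
        rw [e1, e2]
        have : |t| * ‖z‖ ≤ 1 * ‖z‖ := by
          apply mul_le_mul_of_nonneg_right _ (norm_nonneg z)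
          rw [_root_.abs_of_nonneg ht0]; exact ht1
        linarith
      have hb2 : (-((u:ℂ) - (t:ℂ)*(Complex.I*z))^2).re ≤ -u^2 + z.re^2 := by
        rw [re_sq_sub u ((t:ℂ)*(Complex.I*z))]
        have hre : ((t:ℂ)*(Complex.I*z)).re = -(t*z.im) := by
          simp [Complex.mul_re, Complex.mul_im]
        have him : ((t:ℂ)*(Complex.I*z)).im = t*z.re := by
          simp [Complex.mul_re, Complex.mul_im]
        rw [hre, him]
        have hy : 0 ≤ t*z.im := mul_nonneg ht0 hz
        have ht2 : t^2 ≤ 1 := by nlinarith [sq_nonneg t]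
        have h2 : (t*z.re)^2 ≤ z.re^2 := by
          rw [mul_pow]
          nlinarith [sq_nonneg z.re]
        have h1 : u^2 ≤ (u - -(t*z.im))^2 := by nlinarith
        nlinarith
      have hn : ‖(2:ℂ)‖*‖Complex.I‖*‖z‖ = 2*‖z‖ := by simp
      have he : Real.exp ((-((u:ℂ) - (t:ℂ)*(Complex.I*z))^2).re)
          ≤ Real.exp (-u^2) * Real.exp (z.re^2) := by
        rw [← Real.exp_add]
        exact Real.exp_le_exp.2 (by linarith)
      have hnn1 : (0:ℝ) ≤ |u| + ‖z‖ := by positivity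
      have key : ‖(2:ℂ)‖*‖Complex.I‖*‖z‖ * ‖(u:ℂ) - (t:ℂ)*(Complex.I*z)‖ *
            Real.exp ((-((u:ℂ) - (t:ℂ)*(Complex.I*z))^2).re)
          ≤ (2*‖z‖) * ((|u| + ‖z‖) * (Real.exp (-u^2) * Real.exp (z.re^2))) := by
        rw [hn, mul_assoc]
        apply mul_le_mul_of_nonneg_left _ (by positivity)
        exact mul_le_mul hb1 he (Real.exp_pos _).le hnn1
      refine key.trans_eq ?_
      ring
  have swap := MeasureTheory.integral_integral_swap hprod
  -- inner integral value
  have inner_val : ∀ t : ℝ, ∫ u in Ioi (0:ℝ), f u t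
      = Complex.I * (z * Complex.exp (((t:ℂ)*z)^2)) := by
    intro t
    have : ∀ u : ℝ, f u t = (2*Complex.I*z) *
        (((u:ℂ) - (t:ℂ)*(Complex.I*z)) * Complex.exp (-((u:ℂ) - (t:ℂ)*(Complex.I*z))^2)) := by
      intro u; rw [hf_def]; ring
    simp_rw [this]
    rw [integral_const_mul, halfline_gauss ((t:ℂ)*(Complex.I*z))]
    have : -((t:ℂ)*(Complex.I*z))^2 = ((t:ℂ)*z)^2 := by
      rw [mul_pow, mul_pow, Complex.I_sq]; ring
    rw [this]
    ring
  -- assemble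
  have split : ∫ u in Ioi (0:ℝ), Complex.exp (-((u:ℂ) - Complex.I*z)^2)
      = (∫ u in Ioi (0:ℝ), (Complex.exp (-((u:ℂ) - Complex.I*z)^2) - Complex.exp (-(u:ℂ)^2)))
        + ∫ u in Ioi (0:ℝ), Complex.exp (-(u:ℂ)^2) := by
    rw [integral_sub hint1 hint2]; ring
  rw [split, gauss_Ioi_complex]
  have : ∫ u in Ioi (0:ℝ), (Complex.exp (-((u:ℂ) - Complex.I*z)^2) - Complex.exp (-(u:ℂ)^2))
      = Complex.I * lineInt z := by
    have e1 : ∀ u : ℝ, Complex.exp (-((u:ℂ) - Complex.I*z)^2) - Complex.exp (-(u:ℂ)^2)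
        = ∫ t in Ioc (0:ℝ) 1, f u t := by
      intro u
      rw [claim1 u, intervalIntegral.integral_of_le zero_le_one]
    simp_rw [e1]
    rw [swap]
    have e2 : ∫ t in Ioc (0:ℝ) 1, ∫ u in Ioi (0:ℝ), f u t
        = ∫ t in Ioc (0:ℝ) 1, Complex.I * (z * Complex.exp (((t:ℂ)*z)^2)) := by
      congr 1; ext t; exact inner_val t
    rw [e2, integral_const_mul]
    congr 1
    rw [lineInt, intervalIntegral.integral_of_le zero_le_one]
  rw [this]
  ring

lemma exp_halfline (w : ℂ) (hw : 0 < w.im) :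
    ∫ s in Ioi (0:ℝ), Complex.exp (Complex.I*(s:ℂ)*w) = Complex.I / w := by
  have hw0 : w ≠ 0 := by
    intro h; rw [h] at hw; simp at hw
  have hIw : Complex.I * w ≠ 0 := mul_ne_zero Complex.I_ne_zero hw0
  have hd : ∀ s ∈ Ici (0:ℝ), HasDerivAt (fun s : ℝ => Complex.exp (Complex.I*(s:ℂ)*w) / (Complex.I*w))
      (Complex.exp (Complex.I*(s:ℂ)*w)) s := by
    intro s _
    have H : HasDerivAt (fun v : ℂ => Complex.exp (Complex.I*v*w) / (Complex.I*w))
        (Complex.exp (Complex.I*(s:ℂ)*w)) (s:ℂ) := by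
      have h1 : HasDerivAt (fun v : ℂ => Complex.I*v*w) (Complex.I*w) (s:ℂ) := by
        simpa using (((hasDerivAt_id ((s:ℂ))).const_mul Complex.I).mul_const w)
      have := (h1.cexp).div_const (Complex.I*w)
      convert this using 1
      rfl
      rfl
      field_simp
    exact H.comp_ofReal
  have hre : ∀ s : ℝ, (Complex.I*(s:ℂ)*w).re = -(s * w.im) := by
    intro s
    simp [Complex.mul_re, Complex.mul_im]
  have hint : IntegrableOn (fun s : ℝ => Complex.exp (Complex.I*(s:ℂ)*w)) (Ioi 0) := by
    apply Integrable.mono' (exp_neg_integrableOn_Ioi 0 hw)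
    · exact (Continuous.aestronglyMeasurable (by fun_prop)).restrict
    · filter_upwards with s
      rw [norm_cexp, hre]
      apply le_of_eq
      congr 1
      ring
  have hm : Tendsto (fun s : ℝ => Complex.exp (Complex.I*(s:ℂ)*w) / (Complex.I*w)) atTop (𝓝 0) := by
    rw [tendsto_zero_iff_norm_tendsto_zero]
    simp only [norm_div, norm_cexp, hre]
    have h1 : Tendsto (fun s : ℝ => Real.exp (-(s * w.im))) atTop (𝓝 0) := by
      apply Real.tendsto_exp_atBot.comp
      apply tendsto_neg_atBot_iff.mpr
      exact Tendsto.atTop_mul_const hw tendsto_id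
    simpa using h1.div_const ‖Complex.I*w‖
  rw [integral_Ioi_of_hasDerivAt_of_tendsto' hd hint hm]
  simp only [Complex.ofReal_zero, mul_zero, zero_mul, Complex.exp_zero, zero_sub]
  rw [neg_eq_iff_eq_neg, div_eq_iff hIw]
  field_simp
  linear_combination Complex.I_mul_I

lemma sqrt_pi_cpow : ((Real.pi : ℂ) / -(-1)) ^ (1/2 : ℂ) = ((Real.sqrt Real.pi : ℝ) : ℂ) := by
  rw [Real.sqrt_eq_rpow]
  rw [show ((Real.pi : ℂ) / -(-1)) = ((Real.pi : ℝ) : ℂ) by norm_num]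
  rw [show (1/2 : ℂ) = ((1/2 : ℝ) : ℂ) by norm_num]
  rw [← Complex.ofReal_cpow Real.pi_pos.le]

lemma main_int (z : ℂ) (hz : 0 < z.im) :
    ∫ t : ℝ, Complex.exp (-(t:ℂ)^2) * (Complex.I / (z - (t:ℂ)))
      = ((Real.sqrt Real.pi : ℝ) : ℂ) *
        ∫ s in Ioi (0:ℝ), Complex.exp (Complex.I*(s:ℂ)*z - (s:ℂ)^2/4) := by
  set g : ℝ → ℝ → ℂ := fun t s => Complex.exp (-(t:ℂ)^2) * Complex.exp (Complex.I*(s:ℂ)*(z - (t:ℂ)))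
    with hg_def
  have step1 : ∀ t : ℝ, Complex.exp (-(t:ℂ)^2) * (Complex.I / (z - (t:ℂ)))
      = ∫ s in Ioi (0:ℝ), g t s := by
    intro t
    rw [hg_def]
    rw [integral_const_mul]
    congr 1
    rw [← exp_halfline (z - (t:ℂ)) (by simpa using hz)]
  simp_rw [step1]
  have hprod : Integrable (Function.uncurry g) (volume.prod (volume.restrict (Ioi 0))) := by
    have hφ : Integrable (fun t : ℝ => Real.exp (-t^2)) := by
      simpa using integrable_exp_neg_mul_sq (b:=1) one_pos
    have hψ : Integrable (fun s : ℝ => Real.exp (-z.im * s)) (volume.restrict (Ioi 0)) :=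
      exp_neg_integrableOn_Ioi 0 hz
    apply Integrable.mono' (hφ.mul_prod hψ)
    · rw [hg_def]
      exact (by fun_prop : Continuous fun p : ℝ × ℝ =>
        Complex.exp (-(p.1:ℂ)^2) * Complex.exp (Complex.I*(p.2:ℂ)*(z - (p.1:ℂ)))).aestronglyMeasurable
    · filter_upwards with p
      obtain ⟨t, s⟩ := p
      show ‖g t s‖ ≤ _
      simp only [hg_def, norm_mul, norm_cexp]
      apply le_of_eq
      congr 1
      · congr 1
        simp [Complex.mul_re, Complex.mul_im, ← Complex.ofReal_pow]
      · congr 1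
        simp [Complex.mul_re, Complex.mul_im]
        ring
  rw [MeasureTheory.integral_integral_swap hprod]
  rw [← integral_const_mul]
  congr 1
  ext s
  have inner : ∀ t : ℝ, g t s = Complex.exp ((-1)*(t:ℂ)^2 + (-(Complex.I*(s:ℂ)))*(t:ℂ)
      + Complex.I*(s:ℂ)*z) := by
    intro t
    simp only [hg_def]
    rw [← Complex.exp_add]
    congr 1
    ring
  simp_rw [inner]
  rw [integral_cexp_quadratic (by norm_num : (-1:ℂ).re < 0)]
  rw [sqrt_pi_cpow]
  congr 2
  have : (-(Complex.I*(s:ℂ)))^2 = -(s:ℂ)^2 := by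
    rw [neg_pow, mul_pow, Complex.I_sq]
    ring
  rw [this]
  ring

lemma scale_int (z : ℂ) :
    ∫ s in Ioi (0:ℝ), Complex.exp (Complex.I*(s:ℂ)*z - (s:ℂ)^2/4)
      = 2 * Complex.exp (-z^2) * ∫ u in Ioi (0:ℝ), Complex.exp (-((u:ℂ) - Complex.I*z)^2) := by
  have h := integral_comp_mul_left_Ioi
    (fun s : ℝ => Complex.exp (Complex.I*(s:ℂ)*z - (s:ℂ)^2/4)) 0 (two_pos (α := ℝ))
  simp only [mul_zero] at h
  have e : ∀ u : ℝ, Complex.exp (Complex.I*((2*u : ℝ):ℂ)*z - ((2*u : ℝ):ℂ)^2/4)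
      = Complex.exp (-z^2) * Complex.exp (-((u:ℂ) - Complex.I*z)^2) := by
    intro u
    rw [← Complex.exp_add]
    congr 1
    push_cast
    linear_combination z^2 * Complex.I_sq
  simp only [e] at h
  rw [integral_const_mul] at h
  rw [Complex.real_smul] at h
  push_cast at h
  linear_combination (-2:ℂ) * h

theorem w_eq_K_add_iL (x y : ℝ) (hy : 0 < y) :
    w ((x:ℂ) + y * Complex.I) = (K x y : ℂ) + Complex.I * (L x y : ℂ) := by
  set z : ℂ := (x:ℂ) + y * Complex.I with hz_def
  have hzim : 0 < z.im := by simp [hz_def, hy]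
  have hden : ∀ t : ℝ, (0:ℝ) < y^2 + (x - t)^2 := fun t => by positivity
  set f : ℝ → ℝ := fun t => Real.exp (-t^2) / (y^2 + (x - t)^2) with hf_def
  set g : ℝ → ℝ := fun t => Real.exp (-t^2) * (x - t) / (y^2 + (x - t)^2) with hg_def
  have hgauss : Integrable (fun t : ℝ => Real.exp (-t^2)) := by
    simpa using integrable_exp_neg_mul_sq (b:=1) one_pos
  have hf_int : Integrable f := by
    apply Integrable.mono' (hgauss.div_const (y^2))
    · exact Continuous.aestronglyMeasurable
        (Continuous.div (by fun_prop) (by fun_prop) (fun t => (hden t).ne'))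
    · filter_upwards with t
      simp only [hf_def, Real.norm_eq_abs]
      rw [_root_.abs_of_nonneg (by positivity)]
      apply div_le_div_of_nonneg_left (Real.exp_pos _).le (by positivity)
      nlinarith [sq_nonneg (x - t)]
  have hg_int : Integrable g := by
    apply Integrable.mono' (hgauss.div_const (2*y))
    · exact Continuous.aestronglyMeasurable
        (Continuous.div (by fun_prop) (by fun_prop) (fun t => (hden t).ne'))
    · filter_upwards with t
      simp only [hg_def, Real.norm_eq_abs]
      rw [abs_div, abs_mul,
        _root_.abs_of_nonneg (Real.exp_pos _).le, _root_.abs_of_nonneg (hden t).le]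
      rw [div_le_div_iff₀ (hden t) (by positivity)]
      have h1 : 2*y*|x - t| ≤ y^2 + (x - t)^2 := by
        nlinarith [sq_nonneg (y - |x - t|), _root_.sq_abs (x - t), abs_nonneg (x - t)]
      calc Real.exp (-t^2) * |x - t| * (2*y) = Real.exp (-t^2) * (2*y*|x - t|) := by ring
        _ ≤ Real.exp (-t^2) * (y^2 + (x - t)^2) := by
            apply mul_le_mul_of_nonneg_left h1 (Real.exp_pos _).le
  -- pointwise combination
  have hzt : ∀ t : ℝ, z - (t:ℂ) ≠ 0 := by
    intro t h
    have : (z - (t:ℂ)).im = 0 := by rw [h]; rfl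
    simp [hz_def] at this
    exact hy.ne' this
  have key : ∀ t : ℝ, ((y * f t : ℝ) : ℂ) + Complex.I * ((g t : ℝ) : ℂ)
      = Complex.exp (-(t:ℂ)^2) * (Complex.I / (z - (t:ℂ))) := by
    intro t
    have hD : ((y^2 + (x - t)^2 : ℝ) : ℂ) ≠ 0 := by
      exact_mod_cast (hden t).ne'
    have hI : Complex.I / (z - (t:ℂ))
        = (((y:ℝ):ℂ) + (((x - t : ℝ)):ℂ)*Complex.I) / (((y^2 + (x - t)^2 : ℝ)):ℂ) := by
      rw [div_eq_div_iff (hzt t) hD]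
      push_cast [hz_def]
      linear_combination (-(y:ℂ)*((x:ℂ)-(t:ℂ))) * Complex.I_sq
    have hD' : ((y:ℂ)^2 + ((x:ℂ)-(t:ℂ))^2) ≠ 0 := by
      rw [show ((y:ℂ)^2 + ((x:ℂ)-(t:ℂ))^2) = (((y^2 + (x - t)^2 : ℝ)):ℂ) by push_cast; ring]
      exact hD
    rw [hI]
    simp only [hf_def, hg_def]
    push_cast
    field_simp
  -- cast integrals
  have cast_int : ∀ (h : ℝ → ℝ), Integrable h →
      ((∫ t : ℝ, h t : ℝ) : ℂ) = ∫ t : ℝ, ((h t : ℝ) : ℂ) := by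
    intro h hh
    have := ContinuousLinearMap.integral_comp_comm Complex.ofRealCLM (φ := h) (μ := volume) hh
    simp only [Complex.ofRealCLM_apply] at this
    rw [this]
  have hf_intC : Integrable (fun t : ℝ => (((y * f t : ℝ)) : ℂ)) :=
    ((hf_int.const_mul y).ofReal (𝕜 := ℂ))
  have hg_intC : Integrable (fun t : ℝ => Complex.I * ((g t : ℝ) : ℂ)) :=
    (hg_int.ofReal (𝕜 := ℂ)).const_mul Complex.I
  have combined : ((y:ℂ)) * ((∫ t, f t : ℝ) : ℂ) + Complex.I * ((∫ t, g t : ℝ) : ℂ)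
      = ∫ t : ℝ, Complex.exp (-(t:ℂ)^2) * (Complex.I / (z - (t:ℂ))) := by
    rw [cast_int f hf_int, cast_int g hg_int]
    rw [← integral_const_mul, ← integral_const_mul]
    rw [← integral_add (by simpa [mul_comm] using hf_intC) hg_intC]
    congr 1
    ext t
    have := key t
    push_cast at this
    exact this
  have hs : ((Real.sqrt Real.pi : ℝ):ℂ) ≠ 0 := by
    exact_mod_cast (Real.sqrt_pos.mpr Real.pi_pos).ne'
  have hππ : ((Real.sqrt Real.pi : ℝ):ℂ) * ((Real.sqrt Real.pi : ℝ):ℂ) = ((Real.pi:ℝ):ℂ) := by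
    norm_cast
    exact Real.mul_self_sqrt Real.pi_pos.le
  have final : (K x y : ℂ) + Complex.I * (L x y : ℂ) = w z := by
    calc (K x y : ℂ) + Complex.I * (L x y : ℂ)
        = (1/(Real.pi : ℂ)) * ((y:ℂ) * ((∫ t, f t : ℝ):ℂ) + Complex.I * ((∫ t, g t : ℝ):ℂ)) := by
          simp only [K, L, ← hf_def, ← hg_def]
          push_cast
          ring
      _ = (1/(Real.pi : ℂ)) * ∫ t : ℝ, Complex.exp (-(t:ℂ)^2) * (Complex.I / (z - (t:ℂ))) := by
          rw [combined]
      _ = (1/(Real.pi : ℂ)) * (((Real.sqrt Real.pi : ℝ) : ℂ) *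
            (2 * Complex.exp (-z^2) *
              (((Real.sqrt Real.pi / 2 : ℝ) : ℂ) + Complex.I * lineInt z))) := by
          rw [main_int z hzim, scale_int z, halfplane_int z hzim.le]
      _ = w z := by
          simp only [w]
          push_cast
          rw [← hππ]
          field_simp
  exact final.symm
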